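/- Let n be a natural number, C : Fin n → E, d̂ : Fin n → ℝ and P̃ ∈ E with ‖C i − P̃‖ ≤ d̂ i for every i. Then for every Q ∈ E with Q ≠ P̃, setting u := ‖Q − P̃‖⁻¹ • (Q − P̃), one has: Q belongs to the intersection of the closed balls of radius d̂ i around C i for all i if and only if dist Q P̃ ≤ R(C i, d̂ i, P̃, u) for all i. (The intersection of the challengers' disks is star-shaped about P̃, with radial function in direction u equal to the minimum of the directional uncertainties.) -/

import Mathlib

/-- The plane. -/
local notation "E" => EuclideanSpace ℝ (Fin 2)

/-- Directional uncertainty `R(C, d̂, P̃, u) = s + sqrt (d̂² − d̃² + s²)`,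
where `d̃ = ‖C − P̃‖` and `s = ⟪C − P̃, u⟫_ℝ`. -/
noncomputable def dirUnc (C Pt : EuclideanSpace ℝ (Fin 2)) (dhat : ℝ)
    (u : EuclideanSpace ℝ (Fin 2)) : ℝ :=
  (inner ℝ (C - Pt) u : ℝ) +
    Real.sqrt (dhat ^ 2 - ‖C - Pt‖ ^ 2 + (inner ℝ (C - Pt) u : ℝ) ^ 2)


/-- The intersection of the challengers' disks is star-shaped about `P̃`: a
point `Q ≠ P̃` lies in all the closed balls of radius `d̂ i` around `C i` iff
its distance to `P̃` is at most every directional uncertainty in the direction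
of `Q` from `P̃`. -/
theorem intersection_star_shaped (n : ℕ) (C : Fin n → E) (dhat : Fin n → ℝ)
    (Pt : E) (h : ∀ i, ‖C i - Pt‖ ≤ dhat i) (Q : E) (hQ : Q ≠ Pt) :
    (∀ i, Q ∈ Metric.closedBall (C i) (dhat i)) ↔
      ∀ i, dist Q Pt ≤ dirUnc (C i) Pt (dhat i) (‖Q - Pt‖⁻¹ • (Q - Pt)) := by
  have hw : Q - Pt ≠ 0 := sub_ne_zero.mpr hQ
  have htpos : (0:ℝ) < ‖Q - Pt‖ := norm_pos_iff.mpr hw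
  refine forall_congr' fun i => ?_
  set t : ℝ := ‖Q - Pt‖ with ht
  set v : E := C i - Pt with hv
  set a : ℝ := inner ℝ v (Q - Pt) with ha
  have hs : (inner ℝ v (t⁻¹ • (Q - Pt)) : ℝ) = t⁻¹ * a := real_inner_smul_right _ _ _
  set s : ℝ := t⁻¹ * a with hsdef
  have hts : t * s = a := by
    rw [hsdef, ← mul_assoc, mul_inv_cancel₀ htpos.ne', one_mul]
  have hvd : ‖v‖ ≤ dhat i := h i
  have hvnn : (0:ℝ) ≤ ‖v‖ := norm_nonneg _
  have hdnn : (0:ℝ) ≤ dhat i := le_trans hvnn hvd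
  have hD : (0:ℝ) ≤ dhat i ^ 2 - ‖v‖ ^ 2 + s ^ 2 := by nlinarith
  set D : ℝ := dhat i ^ 2 - ‖v‖ ^ 2 + s ^ 2 with hDdef
  have hsqrtD : s ≤ Real.sqrt D := by
    have h1 : |s| ≤ Real.sqrt D := by
      rw [← Real.sqrt_sq_eq_abs]
      exact Real.sqrt_le_sqrt (by nlinarith)
    exact (le_abs_self s).trans h1
  have hnormsq : ‖Q - C i‖ ^ 2 = t ^ 2 - 2 * a + ‖v‖ ^ 2 := by
    have : Q - C i = (Q - Pt) - v := by rw [hv]; abel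
    rw [this, @norm_sub_sq_real, real_inner_comm]
  rw [Metric.mem_closedBall, dist_eq_norm, dist_eq_norm, dirUnc, ← hv, hs, ← ht, ← hDdef]
  constructor
  · intro hle
    have hsq : ‖Q - C i‖ ^ 2 ≤ (dhat i) ^ 2 := by
      have := norm_nonneg (Q - C i)
      nlinarith
    have hts2 : (t - s) ^ 2 ≤ D := by nlinarith
    have : t - s ≤ Real.sqrt D := by
      calc t - s ≤ |t - s| := le_abs_self _
        _ = Real.sqrt ((t - s)^2) := (Real.sqrt_sq_eq_abs _).symm
        _ ≤ Real.sqrt D := Real.sqrt_le_sqrt hts2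
    linarith
  · intro hle
    have hlow : -Real.sqrt D ≤ t - s := by
      have : -s ≤ |s| := neg_le_abs s
      have h1 : |s| ≤ Real.sqrt D := by
        rw [← Real.sqrt_sq_eq_abs]
        exact Real.sqrt_le_sqrt (by nlinarith)
      nlinarith
    have hts2 : (t - s) ^ 2 ≤ D := by
      have h2 : (t - s) ^ 2 ≤ Real.sqrt D ^ 2 := sq_le_sq' hlow (by linarith)
      rwa [Real.sq_sqrt hD] at h2
    have hsq : ‖Q - C i‖ ^ 2 ≤ (dhat i) ^ 2 := by nlinarith
    have := norm_nonneg (Q - C i)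
    nlinarith
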